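/- Let C be an 𝔽₂-subspace of V with dim_{𝔽₂} C = n − k, and let γ : C → ℂ with γ(c) ≠ 0 for all c ∈ C be such that the operators g(c) := γ(c)·W(c₁,c₂) (for c = (c₁|c₂) ∈ C) satisfy g(c) ∘ g(c') = g(c + c') for all c, c' ∈ C. For i ∈ V let Q_γ(i) := {f : 𝔽₂^n → ℂ | g(c)f = ε((i,c)ₛ)·f for all c ∈ C}. Then dim_ℂ Q_γ(i) = 2^k for every i ∈ V. -/

import Mathlib

open Finset

/-- `V = 𝔽₂ⁿ × 𝔽₂ⁿ`, elements written `(a|b)`. -/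
abbrev Vn (n : ℕ) : Type := (Fin n → ZMod 2) × (Fin n → ZMod 2)

/-- The symplectic inner product `((a|b),(a'|b'))ₛ = a·b' + a'·b`. -/
def symp {n : ℕ} (v w : Vn n) : ZMod 2 :=
  (∑ i, v.1 i * w.2 i) + (∑ i, w.1 i * v.2 i)

lemma symp_add_left {n : ℕ} (a b s : Vn n) : symp (a + b) s = symp a s + symp b s := by
  simp only [symp, Prod.fst_add, Prod.snd_add, Pi.add_apply, add_mul, mul_add,
    Finset.sum_add_distrib]
  ring

lemma symp_smul_left {n : ℕ} (c : ZMod 2) (v s : Vn n) : symp (c • v) s = c * symp v s := by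
  simp only [symp, Prod.smul_fst, Prod.smul_snd, Pi.smul_apply, smul_eq_mul, mul_add,
    Finset.mul_sum]
  congr 1
  · exact Finset.sum_congr rfl fun i _ => by ring
  · exact Finset.sum_congr rfl fun i _ => by ring

/-- The symplectic orthogonal `S^⊥ₛ` of a subset `S ⊆ V`, as an `𝔽₂`-subspace of `V`. -/
def sympOrtho {n : ℕ} (S : Set (Vn n)) : Submodule (ZMod 2) (Vn n) where
  carrier := {v | ∀ s ∈ S, symp v s = 0}
  zero_mem' := by intro s hs; simp [symp]
  add_mem' := by
    intro a b ha hb s hs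
    rw [Set.mem_setOf_eq] at *
    rw [symp_add_left, ha s hs, hb s hs, add_zero]
  smul_mem' := by
    intro c v hv s hs
    rw [Set.mem_setOf_eq] at *
    rw [symp_smul_left, hv s hs, mul_zero]

/-- `ε : 𝔽₂ → ℂ`, `ε(0) = 1`, `ε(1) = -1`. -/
def eps (x : ZMod 2) : ℂ := if x = 0 then 1 else -1

/-- Quantum weight of `(a|b)`: number of positions `i` with `(aᵢ,bᵢ) ≠ (0,0)`. -/
def wQ {n : ℕ} (v : Vn n) : ℕ :=
  (Finset.univ.filter fun i => (v.1 i, v.2 i) ≠ ((0 : ZMod 2), (0 : ZMod 2))).card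

/-- Quotient minimum norm `‖x̄‖ = min_{v ∈ x̄} w_Q(v)` on `V ⧸ H`. -/
noncomputable def qnorm {n : ℕ} (H : Submodule (ZMod 2) (Vn n)) (x : Vn n ⧸ H) : ℕ :=
  sInf {m | ∃ v : Vn n, (Submodule.Quotient.mk v : Vn n ⧸ H) = x ∧ wQ v = m}

/-- Quotient distance `d(x̄,ȳ) = ‖x̄ - ȳ‖` on `V ⧸ H`. -/
noncomputable def qdist {n : ℕ} (H : Submodule (ZMod 2) (Vn n)) (x y : Vn n ⧸ H) : ℕ :=
  qnorm H (x - y)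

/-- The operator `W(a,b)` acting on functions `𝔽₂ⁿ → ℂ`: `(W(a,b)f)(x) = ε(b·x)·f(x+a)`. -/
def Wop {n : ℕ} (a b : Fin n → ZMod 2) (f : (Fin n → ZMod 2) → ℂ) : (Fin n → ZMod 2) → ℂ :=
  fun x => eps (∑ i, b i * x i) * f (x + a)

/-- The joint eigenspace `Q(i)` of the operators `W(c₁,c₂)`, `(c₁|c₂) ∈ C`. -/
def Qset {n : ℕ} (C : Submodule (ZMod 2) (Vn n)) (i : Vn n) : Set ((Fin n → ZMod 2) → ℂ) :=
  {f | ∀ c ∈ C, ∀ x, Wop c.1 c.2 f x = eps (symp i c) * f x}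

/-- Joint eigenspace `Q_γ(i)` for the rescaled operators `g(c) = γ(c)·W(c₁,c₂)`. -/
noncomputable def QgamSub {n : ℕ} (C : Submodule (ZMod 2) (Vn n)) (γ : C → ℂ) (i : Vn n) :
    Submodule ℂ ((Fin n → ZMod 2) → ℂ) where
  carrier := {f | ∀ c : C, ∀ x,
    γ c * Wop (c : Vn n).1 (c : Vn n).2 f x = eps (symp i (c : Vn n)) * f x}
  zero_mem' := by intro c x; simp [Wop]
  add_mem' := by
    intro f g hf hg c x
    have h1 := hf c x
    have h2 := hg c x
    simp only [Wop, Pi.add_apply] at h1 h2 ⊢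
    linear_combination h1 + h2
  smul_mem' := by
    intro a f hf c x
    have h := hf c x
    simp only [Wop, Pi.smul_apply, smul_eq_mul] at h ⊢
    linear_combination a * h

section Aux

lemma zmod2_cases (a : ZMod 2) : a = 0 ∨ a = 1 := by revert a; decide

lemma eps_add (a b : ZMod 2) : eps (a + b) = eps a * eps b := by
  rcases zmod2_cases a with ha | ha <;> rcases zmod2_cases b with hb | hb <;>
    subst ha <;> subst hb <;>
    simp [eps, (by decide : ((1 : ZMod 2) + 1) = 0), (by decide : (1 : ZMod 2) ≠ 0)]

lemma eps_mul_self (a : ZMod 2) : eps a * eps a = 1 := by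
  rcases zmod2_cases a with ha | ha <;> subst ha <;>
    simp [eps, (by decide : (1 : ZMod 2) ≠ 0)]

lemma symp_add_right {n : ℕ} (s a b : Vn n) : symp s (a + b) = symp s a + symp s b := by
  simp only [symp, Prod.fst_add, Prod.snd_add, Pi.add_apply, add_mul, mul_add,
    Finset.sum_add_distrib]
  ring

lemma add_self_zmod2 {M : Type*} [AddCommGroup M] [Module (ZMod 2) M] (x : M) :
    x + x = 0 := by
  have h := two_smul (ZMod 2) x
  rw [show (2 : ZMod 2) = 0 by decide, zero_smul] at h
  exact h.symm

lemma sum_eps_zero {n : ℕ} {b : Fin n → ZMod 2} (hb : b ≠ 0) :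
    ∑ x : Fin n → ZMod 2, eps (∑ i, b i * x i) = 0 := by
  obtain ⟨j, hj⟩ : ∃ j, b j ≠ 0 := by
    by_contra h; push_neg at h; exact hb (funext h)
  have hbj : b j = 1 := by
    rcases zmod2_cases (b j) with h | h
    · exact absurd h hj
    · exact h
  have flip : ∀ x : Fin n → ZMod 2,
      eps (∑ i, b i * (x + (Pi.single j 1 : Fin n → ZMod 2)) i) = - eps (∑ i, b i * x i) := by
    intro x
    have hsum : ∑ i, b i * (x + (Pi.single j 1 : Fin n → ZMod 2)) i = (∑ i, b i * x i) + 1 := by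
      simp only [Pi.add_apply, mul_add, Finset.sum_add_distrib]
      congr 1
      rw [Finset.sum_eq_single j]
      · simp [hbj]
      · intro i _ hij
        simp [Pi.single_apply, hij]
      · intro h; simp at h
    rw [hsum, eps_add]
    simp [eps, (by decide : (1 : ZMod 2) ≠ 0)]
  have key : ∑ x : Fin n → ZMod 2, eps (∑ i, b i * x i)
      = ∑ x : Fin n → ZMod 2, eps (∑ i, b i * (x + (Pi.single j 1 : Fin n → ZMod 2)) i) :=
    (Fintype.sum_equiv (Equiv.addRight ((Pi.single j 1 : Fin n → ZMod 2)))
      (fun x => eps (∑ i, b i * (x + (Pi.single j 1 : Fin n → ZMod 2)) i))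
      (fun x => eps (∑ i, b i * x i)) (fun x => rfl)).symm
  have h2 : ∑ x : Fin n → ZMod 2, eps (∑ i, b i * x i)
      = - ∑ x : Fin n → ZMod 2, eps (∑ i, b i * x i) := by
    calc ∑ x : Fin n → ZMod 2, eps (∑ i, b i * x i)
        = ∑ x : Fin n → ZMod 2, eps (∑ i, b i * (x + (Pi.single j 1 : Fin n → ZMod 2)) i) := key
      _ = ∑ x : Fin n → ZMod 2, - eps (∑ i, b i * x i) :=
          Finset.sum_congr rfl (fun x _ => flip x)
      _ = - ∑ x : Fin n → ZMod 2, eps (∑ i, b i * x i) := by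
          rw [Finset.sum_neg_distrib]
  have h3 : (2 : ℂ) * ∑ x : Fin n → ZMod 2, eps (∑ i, b i * x i) = 0 := by
    linear_combination h2
  have := mul_eq_zero.mp h3
  simpa using this

variable {n : ℕ}

/-- The averaging projector onto `Q_γ(i)`. -/
noncomputable def Pproj (C : Submodule (ZMod 2) (Vn n)) [Fintype C] (γ : C → ℂ) (i : Vn n) :
    ((Fin n → ZMod 2) → ℂ) →ₗ[ℂ] ((Fin n → ZMod 2) → ℂ) where
  toFun f := fun x => (Fintype.card C : ℂ)⁻¹ *
    ∑ c : C, eps (symp i (c : Vn n)) * (γ c * Wop (c : Vn n).1 (c : Vn n).2 f x)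
  map_add' f g := by
    funext x
    simp only [Wop, Pi.add_apply, Finset.mul_sum, ← Finset.sum_add_distrib]
    apply Finset.sum_congr rfl; intro c _; ring
  map_smul' a f := by
    funext x
    simp only [Wop, Pi.smul_apply, smul_eq_mul, RingHom.id_apply, Finset.mul_sum]
    apply Finset.sum_congr rfl; intro c _; ring

lemma Pproj_apply (C : Submodule (ZMod 2) (Vn n)) [Fintype C] (γ : C → ℂ) (i : Vn n)
    (f : (Fin n → ZMod 2) → ℂ) (x : Fin n → ZMod 2) :
    Pproj C γ i f x = (Fintype.card C : ℂ)⁻¹ *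
      ∑ c : C, eps (symp i (c : Vn n)) * (γ c * Wop (c : Vn n).1 (c : Vn n).2 f x) := rfl

lemma g_Pproj (C : Submodule (ZMod 2) (Vn n)) [Fintype C] (γ : C → ℂ) (i : Vn n)
    (hmul : ∀ c c' : C, ∀ (f : (Fin n → ZMod 2) → ℂ) (x : Fin n → ZMod 2),
      γ c * Wop (c : Vn n).1 (c : Vn n).2
          (fun y => γ c' * Wop (c' : Vn n).1 (c' : Vn n).2 f y) x
        = γ (c + c') * Wop ((c : Vn n) + (c' : Vn n)).1 ((c : Vn n) + (c' : Vn n)).2 f x)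
    (f : (Fin n → ZMod 2) → ℂ) (c : C) (x : Fin n → ZMod 2) :
    γ c * Wop (c : Vn n).1 (c : Vn n).2 (Pproj C γ i f) x
      = eps (symp i (c : Vn n)) * Pproj C γ i f x := by
  have h1 : γ c * Wop (c : Vn n).1 (c : Vn n).2 (Pproj C γ i f) x
      = (Fintype.card C : ℂ)⁻¹ * ∑ c' : C, eps (symp i (c' : Vn n)) *
          (γ c * Wop (c : Vn n).1 (c : Vn n).2
            (fun y => γ c' * Wop (c' : Vn n).1 (c' : Vn n).2 f y) x) := by
    simp only [Wop, Pproj_apply, Finset.mul_sum]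
    apply Finset.sum_congr rfl; intro c' _; ring
  rw [h1]
  have h2 : (∑ c' : C, eps (symp i (c' : Vn n)) *
        (γ c * Wop (c : Vn n).1 (c : Vn n).2
          (fun y => γ c' * Wop (c' : Vn n).1 (c' : Vn n).2 f y) x))
      = ∑ c' : C, eps (symp i (c' : Vn n)) *
          (γ (c + c') * Wop ((c : Vn n) + (c' : Vn n)).1 ((c : Vn n) + (c' : Vn n)).2 f x) :=
    Finset.sum_congr rfl fun c' _ => by rw [hmul]
  rw [h2]
  have h3 : (∑ c' : C, eps (symp i (c' : Vn n)) *
        (γ (c + c') * Wop ((c : Vn n) + (c' : Vn n)).1 ((c : Vn n) + (c' : Vn n)).2 f x))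
      = ∑ d : C, eps (symp i ((c + d : C) : Vn n)) *
          (γ (c + (c + d)) *
            Wop ((c : Vn n) + ((c + d : C) : Vn n)).1
                ((c : Vn n) + ((c + d : C) : Vn n)).2 f x) :=
    (Fintype.sum_equiv (Equiv.addLeft c) _ _ (fun d => rfl)).symm
  rw [h3]
  have h4 : ∀ d : C, eps (symp i ((c + d : C) : Vn n)) *
      (γ (c + (c + d)) *
        Wop ((c : Vn n) + ((c + d : C) : Vn n)).1
            ((c : Vn n) + ((c + d : C) : Vn n)).2 f x)
      = eps (symp i (c : Vn n)) *
          (eps (symp i (d : Vn n)) * (γ d * Wop (d : Vn n).1 (d : Vn n).2 f x)) := by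
    intro d
    have e1 : c + (c + d) = d := by rw [← add_assoc, add_self_zmod2, zero_add]
    have e2 : (c : Vn n) + ((c + d : C) : Vn n) = (d : Vn n) := by
      rw [← Submodule.coe_add, e1]
    have e3 : ((c + d : C) : Vn n) = (c : Vn n) + (d : Vn n) := Submodule.coe_add c d
    rw [e1, e2, e3, symp_add_right, eps_add]
    ring
  rw [Finset.sum_congr rfl fun d _ => h4 d, ← Finset.mul_sum, Pproj_apply]
  ring

lemma Pproj_mem (C : Submodule (ZMod 2) (Vn n)) [Fintype C] (γ : C → ℂ) (i : Vn n)
    (hmul : ∀ c c' : C, ∀ (f : (Fin n → ZMod 2) → ℂ) (x : Fin n → ZMod 2),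
      γ c * Wop (c : Vn n).1 (c : Vn n).2
          (fun y => γ c' * Wop (c' : Vn n).1 (c' : Vn n).2 f y) x
        = γ (c + c') * Wop ((c : Vn n) + (c' : Vn n)).1 ((c : Vn n) + (c' : Vn n)).2 f x)
    (f : (Fin n → ZMod 2) → ℂ) : Pproj C γ i f ∈ QgamSub C γ i :=
  fun c x => g_Pproj C γ i hmul f c x

lemma Pproj_fix (C : Submodule (ZMod 2) (Vn n)) [Fintype C] (γ : C → ℂ) (i : Vn n)
    (f : (Fin n → ZMod 2) → ℂ) (hf : f ∈ QgamSub C γ i) : Pproj C γ i f = f := by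
  have hf' : ∀ c : C, ∀ x, γ c * Wop (c : Vn n).1 (c : Vn n).2 f x
      = eps (symp i (c : Vn n)) * f x := hf
  funext x
  rw [Pproj_apply]
  have : (∑ c : C, eps (symp i (c : Vn n)) * (γ c * Wop (c : Vn n).1 (c : Vn n).2 f x))
      = ∑ _c : C, f x := by
    apply Finset.sum_congr rfl
    intro c _
    rw [hf' c x, ← mul_assoc, eps_mul_self, one_mul]
  rw [this, Finset.sum_const, Finset.card_univ, nsmul_eq_mul, ← mul_assoc]
  have hcard : (Fintype.card C : ℂ) ≠ 0 := by
    exact_mod_cast Fintype.card_ne_zero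
  rw [inv_mul_cancel₀ hcard, one_mul]

lemma trace_Pproj (C : Submodule (ZMod 2) (Vn n)) [Fintype C] (γ : C → ℂ) (i : Vn n)
    (hγ0 : γ 0 = 1) :
    LinearMap.trace ℂ _ (Pproj C γ i) = (Fintype.card C : ℂ)⁻¹ * 2 ^ n := by
  classical
  rw [LinearMap.trace_eq_matrix_trace ℂ (Pi.basisFun ℂ (Fin n → ZMod 2)), Matrix.trace]
  simp only [Matrix.diag_apply, LinearMap.toMatrix_apply, Pi.basisFun_repr, Pi.basisFun_apply]
  have hdiag : ∀ x : Fin n → ZMod 2,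
      Pproj C γ i (Pi.single x (1:ℂ) : (Fin n → ZMod 2) → ℂ) x = (Fintype.card C : ℂ)⁻¹ *
        ∑ c : C, eps (symp i (c : Vn n)) * (γ c *
          (eps (∑ j, (c : Vn n).2 j * x j) * (Pi.single x 1 : (Fin n → ZMod 2) → ℂ) (x + (c : Vn n).1))) := by
    intro x; rw [Pproj_apply]; rfl
  rw [Finset.sum_congr rfl fun x _ => hdiag x, ← Finset.mul_sum, Finset.sum_comm]
  congr 1
  have hterm : ∀ c : C, (∑ x : Fin n → ZMod 2, eps (symp i (c : Vn n)) * (γ c *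
      (eps (∑ j, (c : Vn n).2 j * x j) * (Pi.single x 1 : (Fin n → ZMod 2) → ℂ) (x + (c : Vn n).1))))
      = if c = 0 then (2 : ℂ) ^ n else 0 := by
    intro c
    by_cases hc1 : (c : Vn n).1 = 0
    · by_cases hc2 : (c : Vn n).2 = 0
      · have hc : c = 0 := by
          apply Subtype.ext
          exact Prod.ext hc1 hc2
        subst hc
        simp only [if_pos rfl]
        have : ∀ x : Fin n → ZMod 2, eps (symp i ((0 : C) : Vn n)) * (γ 0 *
            (eps (∑ j, ((0 : C) : Vn n).2 j * x j) *
              (Pi.single x 1 : (Fin n → ZMod 2) → ℂ) (x + ((0 : C) : Vn n).1))) = 1 := by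
          intro x
          have h0 : ((0 : C) : Vn n) = 0 := rfl
          simp only [h0, ZeroMemClass.coe_zero, symp, eps, hγ0, Prod.fst_zero, Prod.snd_zero, Pi.zero_apply,
            zero_mul, mul_zero, Finset.sum_const_zero, add_zero, eq_self_iff_true, if_true,
            one_mul, mul_one, Pi.single_eq_same]
        rw [Finset.sum_congr rfl fun x _ => this x, Finset.sum_const, Finset.card_univ]
        simp [Fintype.card_fun, ZMod.card]
      · have hc : c ≠ 0 := fun h => hc2 (by rw [h]; rfl)
        rw [if_neg hc]
        have : ∀ x : Fin n → ZMod 2, eps (symp i (c : Vn n)) * (γ c *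
            (eps (∑ j, (c : Vn n).2 j * x j) * (Pi.single x 1 : (Fin n → ZMod 2) → ℂ) (x + (c : Vn n).1)))
            = (eps (symp i (c : Vn n)) * γ c) * eps (∑ j, (c : Vn n).2 j * x j) := by
          intro x
          have hx : x + (c : Vn n).1 = x := by rw [hc1, add_zero]
          rw [hx, Pi.single_eq_same]
          ring
        rw [Finset.sum_congr rfl fun x _ => this x, ← Finset.mul_sum, sum_eps_zero hc2,
          mul_zero]
    · have hc : c ≠ 0 := fun h => hc1 (by rw [h]; rfl)
      rw [if_neg hc]
      have : ∀ x : Fin n → ZMod 2, eps (symp i (c : Vn n)) * (γ c *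
          (eps (∑ j, (c : Vn n).2 j * x j) * (Pi.single x 1 : (Fin n → ZMod 2) → ℂ) (x + (c : Vn n).1))) = 0 := by
        intro x
        have hne : x + (c : Vn n).1 ≠ x := by
          intro h
          apply hc1
          have := congrArg (· - x) h
          simpa [add_sub_cancel_left, sub_self] using (by
            have : (c : Vn n).1 = x + (c : Vn n).1 - x := by abel
            rw [this, h, sub_self])
        rw [Pi.single_eq_of_ne hne]
        ring
      rw [Finset.sum_congr rfl fun x _ => this x, Finset.sum_const, smul_zero]
  rw [Finset.sum_congr rfl fun c _ => hterm c, Finset.sum_ite_eq' Finset.univ (0 : C)]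
  simp

end Aux

/-- If `dim C = n - k` and the rescaled operators `g(c) = γ(c)·W(c₁,c₂)`
form a group, then `dim_ℂ Q_γ(i) = 2^k` for every `i ∈ V`. -/
theorem QgamSub_finrank (n k : ℕ) (hn : 0 < n) (hk : k ≤ n) (C : Submodule (ZMod 2) (Vn n))
    (hC : Module.finrank (ZMod 2) C = n - k)
    (γ : C → ℂ) (hγ : ∀ c : C, γ c ≠ 0)
    (hmul : ∀ c c' : C, ∀ (f : (Fin n → ZMod 2) → ℂ) (x : Fin n → ZMod 2),
      γ c * Wop (c : Vn n).1 (c : Vn n).2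
          (fun y => γ c' * Wop (c' : Vn n).1 (c' : Vn n).2 f y) x
        = γ (c + c') * Wop ((c : Vn n) + (c' : Vn n)).1 ((c : Vn n) + (c' : Vn n)).2 f x)
    (i : Vn n) :
    Module.finrank ℂ (QgamSub C γ i) = 2 ^ k := by
  classical
  letI : Fintype C := Fintype.ofFinite C
  -- γ 0 = 1
  have hγ0 : γ 0 = 1 := by
    have h00 := hmul 0 0 (fun _ => (1 : ℂ)) 0
    have hz : ((0 : C) : Vn n) = 0 := rfl
    simp only [hz, add_zero, Wop, Prod.fst_zero, Prod.snd_zero, Pi.zero_apply, zero_mul,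
      Finset.sum_const_zero, eps, eq_self_iff_true, if_true, one_mul, mul_one] at h00
    exact mul_left_cancel₀ (hγ 0) (by rw [h00, mul_one])
  -- |C| = 2^(n-k)
  have hcard : Fintype.card C = 2 ^ (n - k) := by
    have h := Module.card_eq_pow_finrank (K := ZMod 2) (V := C)
    rw [ZMod.card] at h
    rw [h, hC]
  -- the projector
  have hproj : LinearMap.IsProj (QgamSub C γ i) (Pproj C γ i) :=
    ⟨fun f => Pproj_mem C γ i hmul f, fun f hf => Pproj_fix C γ i f hf⟩
  have htr := hproj.trace
  rw [trace_Pproj C γ i hγ0, hcard] at htr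
  have hval : ((2 : ℂ) ^ (n - k))⁻¹ * 2 ^ n = 2 ^ k := by
    have hpow : (2 : ℂ) ^ n = 2 ^ (n - k) * 2 ^ k := by
      rw [← pow_add, Nat.sub_add_cancel hk]
    rw [hpow, inv_mul_cancel_left₀ (pow_ne_zero _ two_ne_zero)]
  rw [show ((2 ^ (n - k) : ℕ) : ℂ) = (2 : ℂ) ^ (n - k) by push_cast; ring, hval] at htr
  have : ((Module.finrank ℂ (QgamSub C γ i) : ℕ) : ℂ) = ((2 ^ k : ℕ) : ℂ) := by
    rw [← htr]; push_cast; ring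
  exact_mod_cast this
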